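/- Let A be a real m × n matrix with m < n, let b ∈ ℝ^m, and let x* ∈ ℝ^n be a vector satisfying A x* = b with support I = supp(x*) ⊆ {1,…,n}. Then x* is the unique solution of the L1-minimization problem min ‖x‖₁ subject to A x = b if and only if the following two conditions both hold: (i) the submatrix A_I formed by the columns of A indexed by I has trivial kernel, i.e. ker(A_I) = {0}; and (ii) there exists ω ∈ ℝ^m such that A_Iᵀ ω = sign(x*)_I and ‖A_{Iᶜ}ᵀ ω‖_∞ < 1, where sign(x*)_I is the vector of signs of the entries of x* on I and A_{Iᶜ} is the submatrix of columns of A indexed by the complement of I. -/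

import Mathlib

open Finset

private lemma slope_zero' {a b u : ℝ} (h : ∀ t : ℝ, u ≤ a + t * b) : b = 0 := by
  by_contra hb
  have h1 := h ((u - a - 1) / b)
  rw [div_mul_cancel₀ _ hb] at h1
  linarith

private lemma sign_mul_self' (x : ℝ) : Real.sign x * x = |x| := by
  rcases lt_trichotomy x 0 with h | h | h
  · rw [Real.sign_of_neg h, abs_of_neg h]; ring
  · simp [h]
  · rw [Real.sign_of_pos h, abs_of_pos h]; ring

private lemma abs_sign_le' (x : ℝ) : |Real.sign x| ≤ 1 := by
  rcases lt_trichotomy x 0 with h | h | h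
  · rw [Real.sign_of_neg h]; norm_num
  · simp [h]
  · rw [Real.sign_of_pos h]; norm_num

private lemma abs_add_small' {a : ℝ} (t v : ℝ) (ha : a ≠ 0) (ht : |t * v| ≤ |a|) :
    |a + t * v| = |a| + Real.sign a * (t * v) := by
  rcases lt_or_gt_of_ne ha with h | h
  · have hb := abs_le.1 ht
    rw [abs_of_neg h] at hb
    rw [Real.sign_of_neg h, abs_of_neg h, abs_of_nonpos (by linarith [hb.2])]
    ring
  · have hb := abs_le.1 ht
    rw [abs_of_pos h] at hb
    rw [Real.sign_of_pos h, abs_of_pos h, abs_of_nonneg (by linarith [hb.1])]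
    ring

private lemma esum_apply' {ι κ : Type*} [Fintype ι] (f : ι → EuclideanSpace ℝ κ) (j : κ) :
    (∑ i, f i) j = ∑ i, f i j :=
  by rw [WithLp.ofLp_sum]; exact Finset.sum_apply j univ _

private lemma perturb' {m n : ℕ} (A : Matrix (Fin m) (Fin n) ℝ) (xs v : Fin n → ℝ)
    (hn : 0 < n) (hAv : A.mulVec v = 0) (hv : v ≠ 0)
    (hG : (∑ i, if xs i = 0 then |v i| else Real.sign (xs i) * v i) ≤ 0) :
    ∃ x : Fin n → ℝ, A.mulVec x = A.mulVec xs ∧ x ≠ xs ∧ ∑ i, |x i| ≤ ∑ i, |xs i| := by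
  classical
  have : Nonempty (Fin n) := ⟨⟨0, hn⟩⟩
  have hne : (univ : Finset (Fin n)).Nonempty := univ_nonempty
  set t : ℝ := univ.inf' hne (fun i => if xs i = 0 ∨ v i = 0 then 1 else |xs i| / |v i|) with ht_def
  have ht : 0 < t := by
    rw [ht_def, Finset.lt_inf'_iff]
    intro i _
    by_cases h : xs i = 0 ∨ v i = 0
    · simp [h]
    · push_neg at h
      rw [if_neg (by tauto)]
      exact div_pos (abs_pos.2 h.1) (abs_pos.2 h.2)
  have hsmall : ∀ i, xs i ≠ 0 → |t * v i| ≤ |xs i| := by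
    intro i hi
    by_cases hvi : v i = 0
    · simp [hvi, abs_nonneg]
    · have h1 : t ≤ |xs i| / |v i| := by
        have h2 := Finset.inf'_le (s := (univ : Finset (Fin n)))
          (fun i => if xs i = 0 ∨ v i = 0 then 1 else |xs i| / |v i|) (mem_univ i)
        rw [if_neg (by tauto)] at h2
        exact h2
      rw [abs_mul, abs_of_pos ht]
      exact (le_div_iff₀ (abs_pos.2 hvi)).1 h1
  refine ⟨xs + t • v, ?_, ?_, ?_⟩
  · rw [Matrix.mulVec_add, Matrix.mulVec_smul, hAv, smul_zero, add_zero]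
  · intro h
    have h0 : t • v = 0 := by
      have := congrArg (fun z => z - xs) h
      simpa using this
    rcases smul_eq_zero.1 h0 with h | h
    · exact absurd h (ne_of_gt ht)
    · exact hv h
  · have key : ∀ i, |(xs + t • v) i| =
        |xs i| + t * (if xs i = 0 then |v i| else Real.sign (xs i) * v i) := by
      intro i
      simp only [Pi.add_apply, Pi.smul_apply, smul_eq_mul]
      by_cases h : xs i = 0
      · rw [if_pos h, h, zero_add, abs_zero, zero_add, abs_mul, abs_of_pos ht]
      · rw [if_neg h, abs_add_small' t (v i) h (hsmall i h)]
        ring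
    have hsum : ∑ i, |(xs + t • v) i| = (∑ i, |xs i|) +
        t * (∑ i, if xs i = 0 then |v i| else Real.sign (xs i) * v i) := by
      rw [Finset.mul_sum, ← Finset.sum_add_distrib]
      exact Finset.sum_congr rfl fun i _ => key i
    rw [hsum]
    nlinarith [hG, ht]

private lemma feasible' {m n : ℕ} (A : Matrix (Fin m) (Fin n) ℝ) (xs : Fin n → ℝ)
    (hker : ∀ v : Fin n → ℝ, (∀ i, xs i = 0 → v i = 0) → A.mulVec v = 0 → v = 0) :
    ∃ ω : Fin m → ℝ, ∀ i, xs i ≠ 0 → ∑ j, A j i * ω j = Real.sign (xs i) := by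
  classical
  set r : Fin m → EuclideanSpace ℝ (Fin n) :=
    fun j => WithLp.toLp 2 (fun i => if xs i = 0 then 0 else A j i) with hr
  set s' : EuclideanSpace ℝ (Fin n) :=
    WithLp.toLp 2 (fun i => if xs i = 0 then 0 else Real.sign (xs i)) with hs'
  have hmem : s' ∈ Submodule.span ℝ (Set.range r) := by
    rw [← Submodule.orthogonal_orthogonal (Submodule.span ℝ (Set.range r))]
    rw [Submodule.mem_orthogonal]
    intro z hz
    have hrz : ∀ j, (∑ i, (if xs i = 0 then 0 else A j i) * z i) = 0 := by
      intro j
      have hj : r j ∈ Submodule.span ℝ (Set.range r) :=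
        Submodule.subset_span (Set.mem_range_self j)
      have h0 := (Submodule.mem_orthogonal _ z).1 hz (r j) hj
      rw [PiLp.inner_apply] at h0
      simpa [hr, mul_comm] using h0
    set z' : Fin n → ℝ := fun i => if xs i = 0 then 0 else z i with hz'
    have hAz' : A.mulVec z' = 0 := by
      funext j
      have : ∑ i, A j i * z' i = ∑ i, (if xs i = 0 then 0 else A j i) * z i := by
        refine Finset.sum_congr rfl fun i _ => ?_
        by_cases h : xs i = 0 <;> simp [hz', h]
      simp only [Matrix.mulVec, dotProduct]
      rw [this, hrz j]
      rfl
    have hz0 := hker z' (fun i hi => by simp [hz', hi]) hAz'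
    have hzi : ∀ i, xs i ≠ 0 → z i = 0 := by
      intro i hi
      have := congrFun hz0 i
      simpa [hz', hi] using this
    rw [PiLp.inner_apply]
    refine Finset.sum_eq_zero fun i _ => ?_
    by_cases h : xs i = 0
    · simp [hs', h]
    · simp [hzi i h]
  rw [Submodule.mem_span_range_iff_exists_fun] at hmem
  obtain ⟨ω, hω⟩ := hmem
  refine ⟨ω, fun i hi => ?_⟩
  have h1 : (∑ j, ω j • r j) i = s' i := by rw [hω]
  rw [WithLp.ofLp_sum, Finset.sum_apply] at h1
  have h2 : ∑ j, ω j * (if xs i = 0 then 0 else A j i) = s' i := by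
    rw [← h1]; exact Finset.sum_congr rfl fun j _ => rfl
  simp only [if_neg hi, hs'] at h2
  rw [← h2]
  exact Finset.sum_congr rfl fun j _ => mul_comm _ _

private lemma backward' {m n : ℕ} (A : Matrix (Fin m) (Fin n) ℝ) (xs : Fin n → ℝ)
    (hker : ∀ v : Fin n → ℝ, (∀ i, xs i = 0 → v i = 0) → A.mulVec v = 0 → v = 0)
    (ω : Fin m → ℝ)
    (hP : ∀ i, xs i ≠ 0 → ∑ j, A j i * ω j = Real.sign (xs i))
    (hQ : ∀ i, xs i = 0 → |∑ j, A j i * ω j| < 1)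
    (x : Fin n → ℝ) (hx : A.mulVec x = A.mulVec xs) (hne : x ≠ xs) :
    ∑ i, |xs i| < ∑ i, |x i| := by
  classical
  set d : Fin n → ℝ := fun i => ∑ j, A j i * ω j with hd
  have key : ∀ z : Fin n → ℝ, (∑ i, d i * z i) = ∑ j, (A.mulVec z) j * ω j := by
    intro z
    have e1 : ∀ i, d i * z i = ∑ j, A j i * ω j * z i := fun i => by
      rw [hd]; exact Finset.sum_mul _ _ _
    rw [Finset.sum_congr rfl fun i _ => e1 i, Finset.sum_comm]
    refine Finset.sum_congr rfl fun j _ => ?_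
    simp only [Matrix.mulVec, dotProduct]
    rw [Finset.sum_mul]
    exact Finset.sum_congr rfl fun i _ => by ring
  have heq : (∑ i, d i * x i) = ∑ i, d i * xs i := by rw [key, key, hx]
  have hxsval : (∑ i, d i * xs i) = ∑ i, |xs i| := by
    refine Finset.sum_congr rfl fun i _ => ?_
    by_cases h : xs i = 0
    · simp [h]
    · simp only [hd]; rw [hP i h, sign_mul_self']
  by_cases hsupp : ∀ i, xs i = 0 → x i = 0
  · exfalso
    apply hne
    have h0 := hker (x - xs) (fun i hi => by simp [hsupp i hi, hi])
      (by rw [Matrix.mulVec_sub, hx, sub_self])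
    exact sub_eq_zero.1 h0
  · push_neg at hsupp
    obtain ⟨i₀, hi₀, hxi₀⟩ := hsupp
    have hlt : (∑ i, d i * x i) < ∑ i, |x i| := by
      refine Finset.sum_lt_sum (fun i _ => ?_) ⟨i₀, mem_univ i₀, ?_⟩
      · have hdi : |d i| ≤ 1 := by
          by_cases h : xs i = 0
          · exact le_of_lt (hQ i h)
          · simp only [hd]; rw [hP i h]; exact abs_sign_le' _
        calc d i * x i ≤ |d i * x i| := le_abs_self _
          _ = |d i| * |x i| := abs_mul _ _
          _ ≤ 1 * |x i| := mul_le_mul_of_nonneg_right hdi (abs_nonneg _)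
          _ = |x i| := one_mul _
      · have hd0 : |d i₀| < 1 := hQ i₀ hi₀
        calc d i₀ * x i₀ ≤ |d i₀ * x i₀| := le_abs_self _
          _ = |d i₀| * |x i₀| := abs_mul _ _
          _ < 1 * |x i₀| := mul_lt_mul_of_pos_right hd0 (abs_pos.2 hxi₀)
          _ = |x i₀| := one_mul _
    linarith [hlt, heq, hxsval]

private lemma dual_exists' {m n : ℕ} (A : Matrix (Fin m) (Fin n) ℝ) (xs : Fin n → ℝ)
    (hn : 0 < n)
    (hker : ∀ v : Fin n → ℝ, (∀ i, xs i = 0 → v i = 0) → A.mulVec v = 0 → v = 0)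
    (hu : ∀ x : Fin n → ℝ, A.mulVec x = A.mulVec xs → x ≠ xs → ∑ i, |xs i| < ∑ i, |x i|) :
    ∃ ω : Fin m → ℝ, (∀ i, xs i ≠ 0 → ∑ j, A j i * ω j = Real.sign (xs i)) ∧
      (∀ i, xs i = 0 → |∑ j, A j i * ω j| < 1) := by
  classical
  by_contra hcon
  push_neg at hcon
  obtain ⟨ω₀, hω₀⟩ := feasible' A xs hker
  set B : Set (Fin n → ℝ) := {y | ∀ i, xs i = 0 → |y i| < 1} with hB
  set VS : Set (Fin n → ℝ) := {y | ∃ ω : Fin m → ℝ,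
      (∀ i, xs i ≠ 0 → ∑ j, A j i * ω j = Real.sign (xs i)) ∧
      y = fun i => if xs i = 0 then ∑ j, A j i * ω j else 0} with hVS
  -- B is open
  have hBopen : IsOpen B := by
    have hBi : B = ⋂ i, {y : Fin n → ℝ | xs i = 0 → |y i| < 1} := by
      ext y; simp [hB, Set.mem_iInter]
    rw [hBi]
    refine isOpen_iInter_of_finite fun i => ?_
    by_cases h : xs i = 0
    · have he : {y : Fin n → ℝ | xs i = 0 → |y i| < 1} = {y | |y i| < 1} := by
        ext y; simp [h]
      rw [he]
      exact isOpen_lt ((continuous_apply i).abs) continuous_const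
    · have he : {y : Fin n → ℝ | xs i = 0 → |y i| < 1} = Set.univ := by
        ext y; simp [h]
      rw [he]; exact isOpen_univ
  -- B is convex
  have hBconv : Convex ℝ B := by
    intro y hy z hz a c ha hc hac
    intro i hi
    have h1 := hy i hi
    have h2 := hz i hi
    rcases eq_or_lt_of_le ha with h | h
    · have hc1 : c = 1 := by linarith
      have : (a • y + c • z) i = z i := by simp [← h, hc1]
      rw [this]; exact h2
    · have e1 : |a * y i| < a := by
        rw [abs_mul, abs_of_pos h]; nlinarith
      have e2 : |c * z i| ≤ c := by
        rw [abs_mul, abs_of_nonneg hc]; nlinarith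
      calc |(a • y + c • z) i| = |a * y i + c * z i| := rfl
        _ ≤ |a * y i| + |c * z i| := abs_add_le _ _
        _ < 1 := by linarith
  -- VS is convex
  have hVSconv : Convex ℝ VS := by
    rintro y ⟨ω₁, hP1, rfl⟩ z ⟨ω₂, hP2, rfl⟩ a c ha hc hac
    refine ⟨a • ω₁ + c • ω₂, fun i hi => ?_, ?_⟩
    · have e : ∀ j, A j i * (a • ω₁ + c • ω₂) j
          = a * (A j i * ω₁ j) + c * (A j i * ω₂ j) := by
        intro j; simp only [Pi.add_apply, Pi.smul_apply, smul_eq_mul]; ring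
      rw [Finset.sum_congr rfl fun j _ => e j, Finset.sum_add_distrib,
        ← Finset.mul_sum, ← Finset.mul_sum, hP1 i hi, hP2 i hi, ← add_mul, hac, one_mul]
    · funext i
      by_cases h : xs i = 0
      · simp only [Pi.add_apply, Pi.smul_apply, smul_eq_mul, if_pos h]
        rw [Finset.mul_sum, Finset.mul_sum, ← Finset.sum_add_distrib]
        refine Finset.sum_congr rfl fun j _ => ?_
        ring
      · simp only [Pi.add_apply, Pi.smul_apply, smul_eq_mul]
        simp [h]
  -- disjoint
  have hdisj : Disjoint B VS := by
    rw [Set.disjoint_left]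
    rintro y hyB ⟨ω, hP, rfl⟩
    obtain ⟨i, hi0, hge⟩ := hcon ω hP
    have := hyB i hi0
    simp only [if_pos hi0] at this
    linarith
  obtain ⟨f, u, hfB, hfVS⟩ := geometric_hahn_banach_open hBconv hBopen hVSconv hdisj
  set g : Fin n → ℝ := fun i => f (fun j => if i = j then 1 else 0) with hg
  have hfy : ∀ y : Fin n → ℝ, f y = ∑ i, y i * g i := by
    intro y
    conv_lhs => rw [pi_eq_sum_univ y]
    rw [map_sum]
    exact Finset.sum_congr rfl fun i _ => by rw [map_smul, smul_eq_mul]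
  have hu0 : 0 < u := by
    have h0 : (0 : Fin n → ℝ) ∈ B := fun i _ => by norm_num
    have := hfB 0 h0
    rwa [map_zero] at this
  set S : ℝ := ∑ i, if xs i = 0 then |g i| else 0 with hS
  have hSu : S ≤ u := by
    by_contra hlt
    push_neg at hlt
    have hS0 : 0 < S := lt_trans hu0 hlt
    set r : ℝ := (u + S) / (2 * S) with hrdef
    have hr0 : 0 ≤ r := by positivity
    have hr1 : r < 1 := by
      rw [hrdef, div_lt_one (by positivity)]; linarith
    set y : Fin n → ℝ := fun i => if xs i = 0 then r * Real.sign (g i) else 0 with hy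
    have hyB : y ∈ B := by
      intro i hi
      simp only [hy, if_pos hi]
      calc |r * Real.sign (g i)| = r * |Real.sign (g i)| := by
            rw [abs_mul, abs_of_nonneg hr0]
        _ ≤ r * 1 := by nlinarith [abs_sign_le' (g i)]
        _ < 1 := by linarith
    have hfyB := hfB y hyB
    rw [hfy] at hfyB
    have hyval : (∑ i, y i * g i) = r * S := by
      rw [hS, Finset.mul_sum]
      refine Finset.sum_congr rfl fun i _ => ?_
      by_cases h : xs i = 0
      · simp only [hy, if_pos h]
        rw [mul_assoc, sign_mul_self']
      · simp [hy, h]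
    have hval : r * S = (u + S) / 2 := by
      rw [hrdef]; field_simp
    rw [hyval, hval] at hfyB
    linarith
  -- VS side bound
  have hVside : ∀ ω : Fin m → ℝ,
      (∀ i, xs i ≠ 0 → ∑ j, A j i * ω j = Real.sign (xs i)) →
      u ≤ ∑ i, if xs i = 0 then (∑ j, A j i * ω j) * g i else 0 := by
    intro ω hP
    have hmem : (fun i => if xs i = 0 then ∑ j, A j i * ω j else 0) ∈ VS := ⟨ω, hP, rfl⟩
    have h1 := hfVS _ hmem
    rw [hfy] at h1
    refine le_trans h1 (le_of_eq ?_)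
    refine Finset.sum_congr rfl fun i _ => ?_
    by_cases h : xs i = 0 <;> simp [h]
  -- w and swapping sums
  set w : EuclideanSpace ℝ (Fin m) :=
    WithLp.toLp 2 (fun j => ∑ i, if xs i = 0 then g i * A j i else 0) with hw
  have hFw : ∀ ω : Fin m → ℝ,
      (∑ i, if xs i = 0 then (∑ j, A j i * ω j) * g i else 0) = ∑ j, w j * ω j := by
    intro ω
    have e1 : (∑ i, if xs i = 0 then (∑ j, A j i * ω j) * g i else 0)
        = ∑ i, ∑ j, (if xs i = 0 then A j i * ω j * g i else 0) := by
      refine Finset.sum_congr rfl fun i _ => ?_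
      by_cases h : xs i = 0
      · simp only [if_pos h]; rw [Finset.sum_mul]
      · simp [h]
    rw [e1, Finset.sum_comm]
    refine Finset.sum_congr rfl fun j _ => ?_
    show (∑ i, if xs i = 0 then A j i * ω j * g i else 0)
      = (∑ i, if xs i = 0 then g i * A j i else 0) * ω j
    rw [Finset.sum_mul]
    refine Finset.sum_congr rfl fun i _ => ?_
    by_cases h : xs i = 0 <;> simp [h] <;> ring
  -- orthogonality: w ∈ span of the support columns
  set vcol : Fin n → EuclideanSpace ℝ (Fin m) :=
    fun i => if xs i = 0 then 0 else WithLp.toLp 2 (fun j => A j i) with hvcol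
  have hwM : w ∈ Submodule.span ℝ (Set.range vcol) := by
    rw [← Submodule.orthogonal_orthogonal (Submodule.span ℝ (Set.range vcol)),
      Submodule.mem_orthogonal]
    intro δ hδ
    have hcolδ : ∀ i, xs i ≠ 0 → (∑ j, A j i * δ j) = 0 := by
      intro i hi
      have hv : vcol i ∈ Submodule.span ℝ (Set.range vcol) :=
        Submodule.subset_span (Set.mem_range_self i)
      have h0 := (Submodule.mem_orthogonal _ δ).1 hδ (vcol i) hv
      rw [PiLp.inner_apply] at h0
      have h1 : ∑ j, (vcol i) j * δ j = 0 := by simpa [mul_comm] using h0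
      rw [← h1]
      refine Finset.sum_congr rfl fun j _ => ?_
      simp [hvcol, hi]
    have hline : ∀ t : ℝ, u ≤ (∑ j, w j * ω₀ j) + t * (∑ j, w j * δ j) := by
      intro t
      set ωt : Fin m → ℝ := fun j => ω₀ j + t * δ j with hωt
      have hPt : ∀ i, xs i ≠ 0 →
          ∑ j, A j i * ωt j = Real.sign (xs i) := by
        intro i hi
        have e : ∑ j, A j i * ωt j
            = (∑ j, A j i * ω₀ j) + t * ∑ j, A j i * δ j := by
          rw [Finset.mul_sum, ← Finset.sum_add_distrib]
          refine Finset.sum_congr rfl fun j _ => ?_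
          simp only [hωt]; ring
        rw [e, hω₀ i hi, hcolδ i hi, mul_zero, add_zero]
      have h2 := hVside ωt hPt
      rw [hFw] at h2
      have e2 : ∑ j, w j * ωt j
          = (∑ j, w j * ω₀ j) + t * (∑ j, w j * δ j) := by
        rw [Finset.mul_sum, ← Finset.sum_add_distrib]
        refine Finset.sum_congr rfl fun j _ => ?_
        simp only [hωt]; ring
      rw [e2] at h2
      exact h2
    have hslope := slope_zero' hline
    rw [PiLp.inner_apply]
    have : ∑ j, δ j * w j = ∑ j, w j * δ j :=
      Finset.sum_congr rfl fun j _ => mul_comm _ _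
    simpa [this] using hslope
  obtain ⟨c, hc⟩ := (Submodule.mem_span_range_iff_exists_fun ℝ).1 hwM
  set vv : Fin n → ℝ := fun i => if xs i = 0 then g i else -(c i) with hvv
  have hwj : ∀ j, w j = ∑ i, c i * (vcol i) j := by
    intro j
    rw [← hc, WithLp.ofLp_sum, Finset.sum_apply]
    exact Finset.sum_congr rfl fun i _ => rfl
  have hAvv : A.mulVec vv = 0 := by
    funext j
    simp only [Matrix.mulVec, dotProduct, Pi.zero_apply]
    have e : ∀ i, A j i * vv i
        = (if xs i = 0 then g i * A j i else 0) - c i * (vcol i) j := by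
      intro i
      by_cases h : xs i = 0
      · simp [hvv, hvcol, h]; ring
      · simp [hvv, hvcol, h]; ring
    rw [Finset.sum_congr rfl fun i _ => e i, Finset.sum_sub_distrib]
    rw [← hwj j]
    have : w j = ∑ i, if xs i = 0 then g i * A j i else 0 := by rw [hw]
    rw [← this, sub_self]
  have hvvne : vv ≠ 0 := by
    intro h0
    have hgz : ∀ i, xs i = 0 → g i = 0 := by
      intro i hi
      have := congrFun h0 i
      simpa [hvv, hi] using this
    have h1 := hVside ω₀ hω₀
    have hz : (∑ i, if xs i = 0 then (∑ j, A j i * ω₀ j) * g i else 0) = 0 :=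
      Finset.sum_eq_zero fun i _ => by
        by_cases h : xs i = 0 <;> simp [h, hgz]
    rw [hz] at h1
    linarith
  have hGvv : (∑ i, if xs i = 0 then |vv i| else Real.sign (xs i) * vv i) ≤ 0 := by
    have hw0 : (∑ j, w j * ω₀ j)
        = ∑ i, if xs i = 0 then 0 else c i * Real.sign (xs i) := by
      have e1 : ∀ j, w j * ω₀ j = ∑ i, c i * (vcol i) j * ω₀ j := by
        intro j; rw [hwj j, Finset.sum_mul]
      rw [Finset.sum_congr rfl fun j _ => e1 j, Finset.sum_comm]
      refine Finset.sum_congr rfl fun i _ => ?_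
      by_cases h : xs i = 0
      · simp [hvcol, h]
      · rw [if_neg h, ← hω₀ i h, Finset.mul_sum]
        refine Finset.sum_congr rfl fun j _ => ?_
        simp [hvcol, h]; ring
    have hu1 : u ≤ ∑ j, w j * ω₀ j := by
      rw [← hFw]; exact hVside ω₀ hω₀
    have hsplit : (∑ i, if xs i = 0 then |vv i| else Real.sign (xs i) * vv i)
        = S - ∑ i, (if xs i = 0 then 0 else c i * Real.sign (xs i)) := by
      rw [hS, ← Finset.sum_sub_distrib]
      refine Finset.sum_congr rfl fun i _ => ?_
      by_cases h : xs i = 0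
      · simp [hvv, h]
      · simp [hvv, h]; ring
    rw [hsplit, ← hw0]
    linarith
  obtain ⟨x, hx1, hx2, hx3⟩ := perturb' A xs vv hn hAvv hvvne hGvv
  exact absurd (hu x hx1 hx2) (not_lt.2 hx3)


/-- Theorem 3.1: necessary and sufficient conditions for `xs` to be the unique
solution of the L1-minimization problem `min ‖x‖₁ s.t. A x = b`.
Here `I = supp xs`; the condition `ker(A_I) = {0}` is expressed as: every vector
supported on `I` that lies in the kernel of `A` is zero; the dual-certificate
conditions are expressed coordinatewise over `I` and its complement. -/
theorem l1_unique_solution_iff {m n : ℕ} (hmn : m < n)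
    (A : Matrix (Fin m) (Fin n) ℝ) (b : Fin m → ℝ)
    (xs : Fin n → ℝ) (hxs : A.mulVec xs = b) :
    (∀ x : Fin n → ℝ, A.mulVec x = b → x ≠ xs → ∑ i, |xs i| < ∑ i, |x i|) ↔
    ((∀ v : Fin n → ℝ, (∀ i, xs i = 0 → v i = 0) → A.mulVec v = 0 → v = 0) ∧
      ∃ ω : Fin m → ℝ,
        (∀ i, xs i ≠ 0 → ∑ j, A j i * ω j = Real.sign (xs i)) ∧
        (∀ i, xs i = 0 → |∑ j, A j i * ω j| < 1)) := by
  classical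
  have hn : 0 < n := lt_of_le_of_lt (Nat.zero_le m) hmn
  subst hxs
  constructor
  · intro hu
    have hker : ∀ v : Fin n → ℝ, (∀ i, xs i = 0 → v i = 0) → A.mulVec v = 0 → v = 0 := by
      intro v hsupp hAv
      by_contra hv
      have hneg : (∑ i, if xs i = 0 then |(-v) i| else Real.sign (xs i) * (-v) i)
          = -(∑ i, if xs i = 0 then |v i| else Real.sign (xs i) * v i) := by
        rw [← Finset.sum_neg_distrib]
        refine Finset.sum_congr rfl fun i _ => ?_
        by_cases h : xs i = 0
        · simp [h, hsupp i h]
        · simp [h]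
      rcases le_total (∑ i, if xs i = 0 then |v i| else Real.sign (xs i) * v i) 0 with h | h
      · obtain ⟨x, h1, h2, h3⟩ := perturb' A xs v hn hAv hv h
        exact absurd (hu x h1 h2) (not_lt.2 h3)
      · obtain ⟨x, h1, h2, h3⟩ := perturb' A xs (-v) hn
          (by rw [Matrix.mulVec_neg, hAv, neg_zero]) (neg_ne_zero.2 hv)
          (by rw [hneg]; linarith)
        exact absurd (hu x h1 h2) (not_lt.2 h3)
    exact ⟨hker, dual_exists' A xs hn hker hu⟩
  · rintro ⟨hker, ω, hP, hQ⟩ x hxb hxne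
    exact backward' A xs hker ω hP hQ x hxb hxne
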